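/- Let f: [0,1] → [0,1] be a strictly increasing bijection with f(ν*) = 1/2. The aggregative operator a(x,y) = f⁻¹[f(x) + f(y) - 1/2] is self-dual with respect to the negation n(x) = f⁻¹(1 - f(x)): whenever 0 < f(x) + f(y) - 1/2 < 1, we have n(a(x,y)) = a(n(x), n(y)). -/
import Mathlib


noncomputable def cut (x : ℝ) : ℝ := max 0 (min 1 x)

theorem aggregative_self_dual
    (f g : ℝ → ℝ)
    (hf : StrictMonoOn f (Set.Icc (0:ℝ) 1))
    (hmap : f '' Set.Icc (0:ℝ) 1 = Set.Icc (0:ℝ) 1)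
    (hgf : ∀ x ∈ Set.Icc (0:ℝ) 1, g (f x) = x)
    (hfg : ∀ y ∈ Set.Icc (0:ℝ) 1, f (g y) = y)
    (ν : ℝ) (hν : ν ∈ Set.Icc (0:ℝ) 1) (hν2 : f ν = 1/2)
    (x y : ℝ) (hx : x ∈ Set.Icc (0:ℝ) 1) (hy : y ∈ Set.Icc (0:ℝ) 1)
    (h1 : 0 < f x + f y - 1/2) (h2 : f x + f y - 1/2 < 1) :
    g (1 - f (g (cut (f x + f y - 1/2)))) =
      g (cut (f (g (1 - f x)) + f (g (1 - f y)) - 1/2)) := by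
  have hfx : f x ∈ Set.Icc (0:ℝ) 1 := hmap ▸ Set.mem_image_of_mem f hx
  have hfy : f y ∈ Set.Icc (0:ℝ) 1 := hmap ▸ Set.mem_image_of_mem f hy
  obtain ⟨hfx0, hfx1⟩ := hfx
  obtain ⟨hfy0, hfy1⟩ := hfy
  have hcut1 : cut (f x + f y - 1/2) = f x + f y - 1/2 := by
    unfold cut
    rw [min_eq_right h2.le, max_eq_right h1.le]
  rw [hcut1]
  have hmem : f x + f y - 1/2 ∈ Set.Icc (0:ℝ) 1 := ⟨h1.le, h2.le⟩
  rw [hfg _ hmem]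
  have h1x : (1 - f x) ∈ Set.Icc (0:ℝ) 1 := ⟨by linarith, by linarith⟩
  have h1y : (1 - f y) ∈ Set.Icc (0:ℝ) 1 := ⟨by linarith, by linarith⟩
  rw [hfg _ h1x, hfg _ h1y]
  have : cut (1 - f x + (1 - f y) - 1/2) = 1 - f x + (1 - f y) - 1/2 := by
    unfold cut
    rw [min_eq_right (by linarith), max_eq_right (by linarith)]
  rw [this]
  ring_nf
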